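/- Let r > m ≥ 1 be integers and let k₁,…,k_r be integers with each k_i ≥ 2. Suppose R₁,…,R_r are positive integers such that for each i ∈ {1,…,r}, every (r;m)-coloring of the complete graph on R_i vertices contains, for some j, a monochromatic clique in color j of size k_j if j ≠ i and of size k_i − 1 if j = i. Then every (r;m)-coloring of the complete graph on n vertices with m·n ≥ R₁+⋯+R_r contains, for some j ∈ {1,…,r}, a monochromatic clique of k_j vertices in color j. (Equivalently, R^m(k₁,…,k_r) ≤ (R₁+⋯+R_r)/m where R_i = R^m(k₁,…,k_{i−1}, k_i−1, k_{i+1},…,k_r).) -/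

import Mathlib

/-- In an edge-coloring of the complete graph on `Fin n` assigning each edge a set of
colors from `Fin r`, `HasMonoClique χ i k` says there is a clique of `k` vertices all
of whose edges have color `i` in their assigned set. -/
def HasMonoClique {n r : ℕ} (χ : Sym2 (Fin n) → Finset (Fin r)) (i : Fin r) (k : ℕ) : Prop :=
  ∃ W : Finset (Fin n), W.card = k ∧ ∀ a ∈ W, ∀ b ∈ W, a ≠ b → i ∈ χ s(a, b)

/-- Recurrence for extended Ramsey numbers:
`R^m(k₁,…,k_r) ≤ (R₁+⋯+R_r)/m` where `Rᵢ = R^m(k₁,…,kᵢ−1,…,k_r)`. Stated via colorings: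
if every `(r;m)`-coloring of `K_{Rᵢ}` has, for some `j`, a monochromatic clique in color
`j` of size `k_j` (or `k_i − 1` when `j = i`), then every `(r;m)`-coloring of `K_n` with
`m·n ≥ R₁+⋯+R_r` has a monochromatic clique of `k_j` vertices in some color `j`. -/
theorem stmt16 (r m : ℕ) (hm : 1 ≤ m) (hmr : m < r)
    (k : Fin r → ℕ) (hk : ∀ i, 2 ≤ k i)
    (R : Fin r → ℕ) (hR : ∀ i, 0 < R i)
    (hRam : ∀ i : Fin r, ∀ χ : Sym2 (Fin (R i)) → Finset (Fin r),
      (∀ e, (χ e).card = m) →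
      ∃ j : Fin r, HasMonoClique χ j (if j = i then k j - 1 else k j))
    (n : ℕ) (hn : ∑ i, R i ≤ m * n)
    (χ : Sym2 (Fin n) → Finset (Fin r)) (hχ : ∀ e, (χ e).card = m) :
    ∃ j : Fin r, HasMonoClique χ j (k j) := by
  have hr0 : 0 < r := lt_of_le_of_lt (Nat.zero_le m) hmr
  have hn0 : 0 < n := by
    rcases Nat.eq_zero_or_pos n with h | h
    · exfalso
      subst h
      have h0 : (0:ℕ) < ∑ i, R i :=
        Finset.sum_pos (fun i _ => hR i) (Finset.univ_nonempty_iff.2 ⟨⟨0, hr0⟩⟩)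
      simp only [Nat.mul_zero, Nat.le_zero] at hn
      omega
    · exact h
  set v : Fin n := ⟨0, hn0⟩ with hv
  set N : Fin r → Finset (Fin n) :=
    fun i => (Finset.univ.erase v).filter (fun u => i ∈ χ s(v, u)) with hN
  have key : ∑ i, (N i).card = m * (n - 1) := by
    calc ∑ i, (N i).card
        = ∑ i, ∑ u ∈ Finset.univ.erase v, if i ∈ χ s(v, u) then 1 else 0 := by
          refine Finset.sum_congr rfl fun i _ => ?_
          rw [hN]
          exact Finset.card_filter _ _
      _ = ∑ u ∈ Finset.univ.erase v, ∑ i, if i ∈ χ s(v, u) then 1 else 0 :=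
          Finset.sum_comm
      _ = ∑ u ∈ Finset.univ.erase v, (χ s(v, u)).card := by
          refine Finset.sum_congr rfl fun u _ => ?_
          rw [← Finset.card_filter]
          congr 1
          simp [Finset.filter_mem_eq_inter]
      _ = ∑ u ∈ Finset.univ.erase v, m := by simp [hχ]
      _ = m * (n - 1) := by
          rw [Finset.sum_const, Finset.card_erase_of_mem (Finset.mem_univ v),
            Finset.card_univ, Fintype.card_fin, smul_eq_mul, mul_comm]
  have hex : ∃ i, R i ≤ (N i).card := by
    by_contra h
    push_neg at h
    have h1 : ∀ i ∈ Finset.univ, (N i).card + 1 ≤ R i := fun i _ => h i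
    have h2 : ∑ i, ((N i).card + 1) ≤ ∑ i, R i := Finset.sum_le_sum h1
    rw [Finset.sum_add_distrib, key] at h2
    simp [Finset.card_univ] at h2
    have hmn : m * (n - 1) + m = m * n := by
      have : n - 1 + 1 = n := Nat.succ_pred_eq_of_pos hn0
      calc m * (n - 1) + m = m * (n - 1 + 1) := by ring
        _ = m * n := by rw [this]
    omega
  obtain ⟨i, hi⟩ := hex
  obtain ⟨S, hSN, hScard⟩ := Finset.exists_subset_card_eq (s := N i) (n := R i) hi
  set f : Fin (R i) → Fin n := fun x => S.orderEmbOfFin hScard x with hf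
  have hfinj : Function.Injective f := (S.orderEmbOfFin hScard).injective
  have hfS : ∀ x, f x ∈ S := fun x => S.orderEmbOfFin_mem hScard x
  have hfN : ∀ x, f x ∈ N i := fun x => hSN (hfS x)
  have hfv : ∀ x, f x ≠ v := by
    intro x hx
    have := hfN x
    rw [hx] at this
    simp [hN] at this
  have hfcol : ∀ x, i ∈ χ s(v, f x) := by
    intro x
    have := hfN x
    simp [hN, Finset.mem_filter] at this
    exact this.2
  set χ' : Sym2 (Fin (R i)) → Finset (Fin r) := fun e => χ (e.map f) with hχ'def
  have hχ' : ∀ e, (χ' e).card = m := fun e => hχ _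
  obtain ⟨j, W', hW'card, hW'mono⟩ := hRam i χ' hχ'
  have hmap : ∀ a b : Fin (R i), χ' s(a, b) = χ s(f a, f b) := by
    intro a b; simp [hχ'def, Sym2.map_pair_eq]
  by_cases hji : j = i
  · subst hji
    refine ⟨j, insert v (W'.map ⟨f, hfinj⟩), ?_, ?_⟩
    · rw [Finset.card_insert_of_notMem, Finset.card_map, hW'card]
      · simp
        have := hk j
        omega
      · simp only [Finset.mem_map]
        rintro ⟨x, -, hx⟩
        exact hfv x hx
    · intro a ha b hb hab
      simp only [Finset.mem_insert, Finset.mem_map, Function.Embedding.coeFn_mk] at ha hb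
      rcases ha with rfl | ⟨x, hx, rfl⟩
      · rcases hb with rfl | ⟨y, hy, rfl⟩
        · exact absurd rfl hab
        · exact hfcol y
      · rcases hb with rfl | ⟨y, hy, rfl⟩
        · rw [Sym2.eq_swap]; exact hfcol x
        · have hxy : x ≠ y := fun h => hab (by rw [h])
          have := hW'mono x hx y hy hxy
          rwa [hmap] at this
  · refine ⟨j, W'.map ⟨f, hfinj⟩, by rw [Finset.card_map, hW'card]; simp [hji], ?_⟩
    intro a ha b hb hab
    simp only [Finset.mem_map, Function.Embedding.coeFn_mk] at ha hb
    obtain ⟨x, hx, rfl⟩ := ha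
    obtain ⟨y, hy, rfl⟩ := hb
    have hxy : x ≠ y := fun h => hab (by rw [h])
    have := hW'mono x hx y hy hxy
    rwa [hmap] at this
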